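/- (Isometric Cover Lemma) Let G be a finite connected simple graph and let {H_1, …, H_k} be an isometric cover of G. Then gp(G) ≤ gp(H_1) + gp(H_2) + ⋯ + gp(H_k). -/
import Mathlib


open SimpleGraph

variable {V : Type*}

/-- `S` is a general position set of `G`: no three pairwise distinct vertices of `S`
lie on a common shortest path, i.e. no `v ∈ S` lies strictly between `u, w ∈ S`. -/
def IsGPSet (G : SimpleGraph V) (S : Set V) : Prop :=
  ∀ u ∈ S, ∀ v ∈ S, ∀ w ∈ S, u ≠ v → v ≠ w → u ≠ w →
    ¬(G.Reachable u w ∧ G.dist u v + G.dist v w = G.dist u w)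

/-- The general position number of `G`. -/
noncomputable def gpNum (G : SimpleGraph V) [Fintype V] : ℕ :=
  sSup {n | ∃ S : Finset V, IsGPSet G ↑S ∧ S.card = n}

/-- The subgraph of `G` induced by the vertex set `W` is isometric in `G`:
any two of its vertices are joined by a path inside it, and its distances
agree with those of `G`. -/
def IsIsometricSubset (G : SimpleGraph V) (W : Finset V) : Prop :=
  ∀ u v : (W : Set V), (G.induce (W : Set V)).Reachable u v ∧
    (G.induce (W : Set V)).dist u v = G.dist (u : V) v

/-- Isometric Cover Lemma. -/
theorem gp_le_sum_gp_of_isometric_cover [Fintype V] (G : SimpleGraph V)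
    (hG : G.Connected) (k : ℕ) (H : Fin k → Finset V)
    (hiso : ∀ i, IsIsometricSubset G (H i))
    (hcover : ∀ v : V, ∃ i, v ∈ H i) :
    gpNum G ≤ ∑ i, gpNum (G.induce ((H i : Set V))) := by
  classical
  -- the set defining gpNum G is nonempty
  have hne : {n | ∃ S : Finset V, IsGPSet G ↑S ∧ S.card = n}.Nonempty := by
    exact ⟨0, ∅, by intro u hu; simp at hu, by simp⟩
  apply csSup_le hne
  rintro n ⟨S, hS, rfl⟩
  -- S is covered by the H i
  have hsub : S ⊆ Finset.univ.biUnion (fun i => S ∩ H i) := by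
    intro v hv
    obtain ⟨i, hi⟩ := hcover v
    exact Finset.mem_biUnion.mpr ⟨i, Finset.mem_univ i, Finset.mem_inter.mpr ⟨hv, hi⟩⟩
  calc S.card ≤ (Finset.univ.biUnion (fun i => S ∩ H i)).card :=
        Finset.card_le_card hsub
    _ ≤ ∑ i, (S ∩ H i).card := Finset.card_biUnion_le
    _ ≤ ∑ i, gpNum (G.induce ((H i : Set V))) := by
        apply Finset.sum_le_sum
        intro i _
        -- build the trace of S on H i as a finset of the subtype
        set Si : Finset ((H i : Set V) : Type _) :=
          (S ∩ H i).subtype (fun x => x ∈ ((H i : Set V))) with hSi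
        have hcard : Si.card = (S ∩ H i).card := by
          rw [hSi, Finset.card_subtype]
          congr 1
          apply Finset.filter_true_of_mem
          intro x hx
          simpa using (Finset.mem_inter.mp hx).2
        have hmem : ∀ x : ((H i : Set V) : Type _), x ∈ Si ↔ (x : V) ∈ S ∩ H i := by
          intro x; simp [hSi]
        -- Si is a gp set in the induced graph
        have hgp : IsGPSet (G.induce ((H i : Set V))) ↑Si := by
          intro u hu v hv w hw huv hvw huw
          rintro ⟨-, hdist⟩
          have hu' : (u : V) ∈ S := (Finset.mem_inter.mp ((hmem u).mp (by exact_mod_cast hu))).1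
          have hv' : (v : V) ∈ S := (Finset.mem_inter.mp ((hmem v).mp (by exact_mod_cast hv))).1
          have hw' : (w : V) ∈ S := (Finset.mem_inter.mp ((hmem w).mp (by exact_mod_cast hw))).1
          have d1 := (hiso i u v).2
          have d2 := (hiso i v w).2
          have d3 := (hiso i u w).2
          refine hS _ hu' _ hv' _ hw'
            (fun h => huv (Subtype.coe_injective h))
            (fun h => hvw (Subtype.coe_injective h))
            (fun h => huw (Subtype.coe_injective h)) ?_
          refine ⟨hG.preconnected _ _, ?_⟩
          rw [← d1, ← d2, ← d3]
          exact hdist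
        -- |Si| ≤ gpNum of the induced graph
        rw [← hcard]
        apply le_csSup
        · refine ⟨Fintype.card ((H i : Set V) : Type _), ?_⟩
          rintro m ⟨T, -, rfl⟩
          exact Finset.card_le_univ T
        · exact ⟨Si, hgp, rfl⟩
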